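/- Let W be a nonempty finite type, P a probability mass function on W, G ⊆ W with P_G := Σ_{w∈G} P_w > 0, and δ > 0. Set C = 1 + (e^δ − 1)·P_G and define the soft green-list distribution Q by Q_w = e^δ·P_w/C for w ∈ G and Q_w = P_w/C for w ∉ G. Let (ζ, w) be produced by the one-step speculative (rejection) sampler with draft distribution Q and target distribution P. Then the conditional distribution of ζ given the event {w ∈ G} is uniform on [0, C/e^δ] = [0, P_G + (1−P_G)/e^δ]; equivalently, for every Borel set A ⊆ [0,1], the probability of {ζ ∈ A and w ∈ G} equals P_G · (e^δ/C) · Leb(A ∩ [0, C/e^δ]). (Lemma A.4.) -/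

import Mathlib

open MeasureTheory Set

/-- **Lemma A.4 (soft green-list watermark via one-step speculative sampling).**
`W` is a nonempty finite vocabulary, `P` a probability mass function on `W`, `G` a green
list with `PG = ∑ w ∈ G, P w > 0`, `δ > 0`, `C = 1 + (e^δ - 1)·PG`, and `Q` is the soft
green-list distribution: `Q w = e^δ·P w / C` for `w ∈ G` and `Q w = P w / C` otherwise.
The one-step speculative (rejection) sampler with draft `Q` and target `P` produces
`(ζ, tok)`: `ζ` is uniform on `[0,1]`, a draft `W' ~ Q` is drawn independently, accepted
(`tok = W'`) iff `ζ·Q_{W'} ≤ P_{W'}`, and otherwise `tok` is drawn independently from the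
normalized excess distribution `w ↦ max 0 (P w - Q w) / ∑ w', max 0 (P w' - Q w')`; the
resulting joint law is encoded by `hjoint` (as a density in `z` on `[0,1]`).
Conclusion: the conditional distribution of `ζ` given `{tok ∈ G}` is uniform on
`[0, C/e^δ]`; equivalently, for every Borel set `A`,
`ℙ(ζ ∈ A ∧ tok ∈ G) = PG · (e^δ/C) · Leb(A ∩ [0, C/e^δ])`. -/
theorem soft_greenlist_cond_given_green
    {W : Type*} [Fintype W] [Nonempty W] [DecidableEq W]
    [MeasurableSpace W] [MeasurableSingletonClass W]
    (P : W → ℝ) (hP0 : ∀ w, 0 ≤ P w) (hP1 : ∑ w, P w = 1)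
    (G : Finset W) (PG : ℝ) (hPG : PG = ∑ w ∈ G, P w) (hPGpos : 0 < PG)
    (δ : ℝ) (hδ : 0 < δ)
    (C : ℝ) (hC : C = 1 + (Real.exp δ - 1) * PG)
    (Q : W → ℝ)
    (hQ : ∀ w, Q w = if w ∈ G then Real.exp δ * P w / C else P w / C)
    {Ω : Type*} [MeasurableSpace Ω] (μ : Measure Ω) [IsProbabilityMeasure μ]
    (ζ : Ω → ℝ) (tok : Ω → W) (hζ : Measurable ζ) (htok : Measurable tok)
    (hjoint : ∀ (w₀ : W) (A : Set ℝ), MeasurableSet A →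
      (μ {ω | ζ ω ∈ A ∧ tok ω = w₀}).toReal =
        ∫ z in A ∩ Icc (0 : ℝ) 1,
          (Q w₀ * (if z * Q w₀ ≤ P w₀ then 1 else 0)
            + (∑ w', Q w' * (if z * Q w' ≤ P w' then 0 else 1))
              * (max 0 (P w₀ - Q w₀) / ∑ w', max 0 (P w' - Q w')))) :
    ∀ A : Set ℝ, MeasurableSet A →
      (μ {ω | ζ ω ∈ A ∧ tok ω ∈ G}).toReal =
        PG * (Real.exp δ / C) * (volume (A ∩ Icc 0 (C / Real.exp δ))).toReal := by

  intro A hA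
  set E := Real.exp δ with hE
  have hEpos : 0 < E := Real.exp_pos δ
  have hE1 : 1 < E := by have := Real.add_one_le_exp δ; simp only [← hE] at *; linarith
  have hPG1 : PG ≤ 1 := by
    rw [hPG, ← hP1]
    exact Finset.sum_le_sum_of_subset_of_nonneg (Finset.subset_univ G) (fun w _ _ => hP0 w)
  have hC1 : 1 ≤ C := by nlinarith
  have hCpos : 0 < C := by linarith
  have hCE : C ≤ E := by nlinarith
  set T := C / E with hT
  have hTpos : 0 < T := div_pos hCpos hEpos
  have hT1 : T ≤ 1 := by rw [hT, div_le_one hEpos]; exact hCE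
  have key : ∀ w₀ ∈ G, (μ {ω | ζ ω ∈ A ∧ tok ω = w₀}).toReal
      = E * P w₀ / C * (volume (A ∩ Icc 0 T)).toReal := by
    intro w₀ hw
    rw [hjoint w₀ A hA]
    have hQw : Q w₀ = E * P w₀ / C := by rw [hQ w₀, if_pos hw]
    have hQge : P w₀ ≤ Q w₀ := by
      rw [hQw, le_div_iff₀ hCpos]; nlinarith [hP0 w₀]
    have hmax : max 0 (P w₀ - Q w₀) = 0 := max_eq_left (by linarith)
    have hpt : ∀ z : ℝ,
        (Q w₀ * (if z * Q w₀ ≤ P w₀ then 1 else 0)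
          + (∑ w', Q w' * (if z * Q w' ≤ P w' then 0 else 1))
            * (max 0 (P w₀ - Q w₀) / ∑ w', max 0 (P w' - Q w')))
        = E * P w₀ / C * Set.indicator (Iic T) (fun _ => (1:ℝ)) z := by
      intro z
      rw [hmax, zero_div, mul_zero, add_zero, hQw]
      by_cases hp : P w₀ = 0
      · simp [hp]
      · have hppos : 0 < P w₀ := lt_of_le_of_ne (hP0 w₀) (Ne.symm hp)
        have hiff : z * (E * P w₀ / C) ≤ P w₀ ↔ z ≤ T := by
          rw [hT, le_div_iff₀ hEpos, ← mul_div_assoc, div_le_iff₀ hCpos]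
          constructor <;> intro h <;> nlinarith
        rw [Set.indicator_apply]
        simp only [mem_Iic, hiff]
    rw [setIntegral_congr_fun (hA.inter measurableSet_Icc) (fun z _ => hpt z),
      MeasureTheory.integral_const_mul, setIntegral_indicator measurableSet_Iic, setIntegral_const,
      smul_eq_mul, mul_one, inter_assoc,
      show Icc (0:ℝ) 1 ∩ Iic T = Icc 0 T by
        ext x
        simp only [mem_inter_iff, mem_Icc, mem_Iic]
        exact ⟨fun h => ⟨h.1.1, h.2⟩, fun h => ⟨⟨h.1, h.2.trans hT1⟩, h.2⟩⟩]
    rfl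
  have hdisj : (↑G : Set W).PairwiseDisjoint
      (fun w₀ => {ω | ζ ω ∈ A ∧ tok ω = w₀}) := by
    intro a _ b _ hab
    refine Set.disjoint_left.mpr ?_
    intro ω h1 h2
    exact hab (h1.2.symm.trans h2.2)
  have hmeas : ∀ w₀ ∈ G, MeasurableSet {ω | ζ ω ∈ A ∧ tok ω = w₀} := by
    intro w₀ _
    exact (hζ hA).inter (htok (measurableSet_singleton w₀))
  have hsplit : {ω | ζ ω ∈ A ∧ tok ω ∈ G}
      = ⋃ w₀ ∈ G, {ω | ζ ω ∈ A ∧ tok ω = w₀} := by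
    ext ω
    simp only [mem_setOf_eq, mem_iUnion, exists_prop]
    constructor
    · rintro ⟨h1, h2⟩; exact ⟨tok ω, h2, h1, rfl⟩
    · rintro ⟨w₀, hw, h1, h2⟩; exact ⟨h1, h2 ▸ hw⟩
  rw [hsplit, measure_biUnion_finset hdisj hmeas,
    ENNReal.toReal_sum (fun w _ => measure_ne_top μ _),
    Finset.sum_congr rfl key]
  have hsum : ∑ w₀ ∈ G, E * P w₀ / C * (volume (A ∩ Icc 0 T)).toReal
      = PG * (E / C) * (volume (A ∩ Icc 0 T)).toReal := by
    rw [← Finset.sum_mul]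
    congr 1
    rw [hPG, Finset.sum_mul]
    exact Finset.sum_congr rfl (fun w _ => by ring)
  rw [hsum]
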